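/- arXiv:2002.08750 — 2 statements merged into one kernel-verified Lean document; each statement's English description precedes it below -/
import Mathlib

section
/- Suppose v(a₃) > 0, v(a₄) > 0 and v(a₆) > 0. Let x = u²x' + r, y = u³y' + u²sx' + t be a change of variables with r, s, t, u ∈ R and v(u) > 0, transforming E into a Weierstrass curve E' whose coefficients a₁', …, a₆' also lie in R. Let P = (x, y) be a point on E with v(x) > 0, and P' = (x', y') its image on E'. If v(φₙ(P)) ≤ v(ψₙ²(P)) for some n ≥ 1, then v(u²·φₙ'(P') + r·(ψₙ')²(P')) = v(u²·φₙ'(P')); equivalently, v(φₙ(P)) = (n² − 1)·v(u²) + v(u²·φₙ'(P')). -/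
open Polynomial

private def Eaux (n : ℕ) : ℤ := (n:ℤ)^2 - if Even n then 4 else 1

private lemma upow_mul {K : Type*} [Field K] {u : K} (hu : u ≠ 0) (a b : ℤ) (P Q : K) :
    (u^a*P)*(u^b*Q) = u^(a+b)*(P*Q) := by rw [zpow_add₀ hu]; ring

private lemma upow_pow {K : Type*} [Field K] {u : K} (_ : u ≠ 0) (a : ℤ) (k : ℕ) (P : K) :
    (u^a*P)^k = u^(a*k)*P^k := by rw [mul_pow, ← zpow_natCast (u^a), ← zpow_mul]

private lemma preNormEDS'_scale {K : Type*} [Field K] {u : K} (hu : u ≠ 0) (B c d : K) (n : ℕ) :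
    preNormEDS' (u^(12:ℤ) * B) (u^(8:ℤ) * c) (u^(12:ℤ) * d) n
      = u ^ (Eaux n) * preNormEDS' B c d n := by
  induction n using Nat.strong_induction_on with
  | _ n ih =>
    match n with
    | 0 => simp
    | 1 => norm_num [Eaux]
    | 2 => norm_num [Eaux]
    | 3 => rw [preNormEDS'_three, preNormEDS'_three, show Eaux 3 = 8 by decide]
    | 4 => rw [preNormEDS'_four, preNormEDS'_four, show Eaux 4 = 12 by decide]
    | (n+5) =>
      rcases Nat.even_or_odd n with ⟨m, hm⟩ | ⟨m, hm⟩
      · have h5 : n + 5 = 2*(m+2)+1 := by omega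
        have ho : ¬ Even (2*(m+2)+1) := by simp [parity_simps]
        rw [h5, preNormEDS'_odd, preNormEDS'_odd,
          ih (m+4) (by omega), ih (m+2) (by omega), ih (m+1) (by omega), ih (m+3) (by omega)]
        rcases Nat.even_or_odd m with hme | hmo
        · have h4 : Even (m+4) := by simpa [parity_simps] using hme
          have h2 : Even (m+2) := by simpa [parity_simps] using hme
          have h1 : ¬ Even (m+1) := by simp [parity_simps, hme]
          have h3 : ¬ Even (m+3) := by simp [parity_simps, hme]
          simp only [if_pos hme, mul_one]
          rw [upow_pow hu, upow_pow hu, upow_mul hu, upow_mul hu, upow_mul hu, mul_sub]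
          congr 1
          · congr 1
            simp only [Eaux, if_pos h4, if_pos h2, if_neg ho]
            push_cast; ring
          · congr 1
            simp only [Eaux, if_neg h1, if_neg h3, if_neg ho]
            push_cast; ring
        · have hme : ¬ Even m := Nat.not_even_iff_odd.mpr hmo
          have h4 : ¬ Even (m+4) := by simp [parity_simps, hme]
          have h2 : ¬ Even (m+2) := by simp [parity_simps, hme]
          have h1 : Even (m+1) := by simpa [parity_simps] using hmo
          have h3 : Even (m+3) := by simpa [parity_simps] using hmo
          simp only [if_neg hme, mul_one]
          rw [upow_pow hu, upow_pow hu, upow_mul hu, upow_mul hu, upow_mul hu, mul_sub]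
          congr 1
          · congr 1
            simp only [Eaux, if_neg h4, if_neg h2, if_neg ho]
            push_cast; ring
          · congr 1
            simp only [Eaux, if_pos h1, if_pos h3, if_neg ho]
            push_cast; ring
      · have h5 : n + 5 = 2*(m+3) := by omega
        have hev : Even (2*(m+3)) := even_two_mul _
        rw [h5, preNormEDS'_even, preNormEDS'_even,
          ih (m+2) (by omega), ih (m+3) (by omega), ih (m+5) (by omega),
          ih (m+1) (by omega), ih (m+4) (by omega),
          upow_pow hu, upow_mul hu, upow_mul hu,
          upow_pow hu, upow_mul hu, upow_mul hu, mul_sub]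
        congr 1
        · congr 1
          rcases Nat.even_or_odd m with hme | hmo
          · have h2 : Even (m+2) := by simpa [parity_simps] using hme
            have h3 : ¬ Even (m+3) := by simp [parity_simps, hme]
            have h5' : ¬ Even (m+5) := by simp [parity_simps, hme]
            simp only [Eaux, if_pos h2, if_neg h3, if_neg h5', if_pos hev]
            push_cast; ring
          · have hme := Nat.not_even_iff_odd.mpr hmo
            have h2 : ¬ Even (m+2) := by simp [parity_simps, hme]
            have h3 : Even (m+3) := by simpa [parity_simps] using hmo
            have h5' : Even (m+5) := by simpa [parity_simps] using hmo
            simp only [Eaux, if_neg h2, if_pos h3, if_pos h5', if_pos hev]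
            push_cast; ring
        · congr 1
          rcases Nat.even_or_odd m with hme | hmo
          · have h1 : ¬ Even (m+1) := by simp [parity_simps, hme]
            have h3 : ¬ Even (m+3) := by simp [parity_simps, hme]
            have h4 : Even (m+4) := by simpa [parity_simps] using hme
            simp only [Eaux, if_neg h1, if_neg h3, if_pos h4, if_pos hev]
            push_cast; ring
          · have hme := Nat.not_even_iff_odd.mpr hmo
            have h1 : Even (m+1) := by simpa [parity_simps] using hmo
            have h3 : Even (m+3) := by simpa [parity_simps] using hmo
            have h4 : ¬ Even (m+4) := by simp [parity_simps, hme]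
            simp only [Eaux, if_pos h1, if_pos h3, if_neg h4, if_pos hev]
            push_cast; ring

private lemma normEDS_scale {K : Type*} [Field K] {u : K} (hu : u ≠ 0) (b c d : K) (k : ℕ) :
    normEDS (u^(3:ℤ)*b) (u^(8:ℤ)*c) (u^(12:ℤ)*d) (k:ℤ)
      = u ^ ((k:ℤ)^2 - 1) * normEDS b c d (k:ℤ) := by
  rw [normEDS_ofNat, normEDS_ofNat]
  have hb4 : (u^(3:ℤ)*b)^4 = u^(12:ℤ)*b^4 := by
    rw [mul_pow, ← zpow_natCast (u^(3:ℤ)), ← zpow_mul]; norm_num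
  rw [hb4, preNormEDS'_scale hu]
  rcases Nat.even_or_odd k with hke | hko
  · rw [if_pos hke, if_pos hke, show Eaux k = (k:ℤ)^2-4 from by rw [Eaux, if_pos hke]]
    rw [mul_mul_mul_comm, ← zpow_add₀ hu]
    congr 2
    ring
  · have hke := Nat.not_even_iff_odd.mpr hko
    rw [if_neg hke, if_neg hke, show Eaux k = (k:ℤ)^2-1 from by rw [Eaux, if_neg hke]]
    ring

private lemma key_identity {K : Type*} [Field K] {u : K} (hu : u ≠ 0) (N : ℤ) (x' r A B C : K) :
    (u^2*x'+r) * (u^(N^2-1)*A)^2 - (u^((N+1)^2-1)*B)*(u^((N-1)^2-1)*C)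
      = u^(2*N^2-2) * (u^2*(x'*A^2 - B*C) + r*A^2) := by
  have e2 : (N^2-1)*((2:ℕ):ℤ) = 2*N^2-2 := by push_cast; ring
  have e1 : ((N+1)^2-1)+((N-1)^2-1) = (2*N^2-2)+2 := by ring
  rw [upow_pow hu, e2, upow_mul hu, e1, zpow_add₀ hu (2*N^2-2) 2,
    show u^(2:ℤ) = u^(2:ℕ) from zpow_ofNat u 2]
  ring

private lemma psi_eval {K : Type*} [CommRing K] (W : WeierstrassCurve K) (x y : K) (m : ℤ) :
    (W.ψ m).evalEval x y
      = normEDS (2*y + W.a₁*x + W.a₃) (W.Ψ₃.eval x) (W.preΨ₄.eval x) m := by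
  rw [WeierstrassCurve.ψ, show (evalEval x y) = ⇑(evalEvalRingHom x y) from rfl, map_normEDS]
  simp [WeierstrassCurve.ψ₂, WeierstrassCurve.Affine.polynomialY]
  ring

private lemma phi_eval {K : Type*} [CommRing K] (W : WeierstrassCurve K) (x y : K) (m : ℤ) :
    (W.φ m).evalEval x y = x * ((W.ψ m).evalEval x y)^2
      - (W.ψ (m+1)).evalEval x y * (W.ψ (m-1)).evalEval x y := by
  rw [WeierstrassCurve.φ]
  simp [evalEval_C]

private lemma phi_eq_Phi {K : Type*} [CommRing K] (W : WeierstrassCurve K) (x y : K)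
    (h : W.toAffine.Equation x y) (N : ℤ) :
    (W.φ N).evalEval x y = (W.Φ N).eval x := by
  have hmk := WeierstrassCurve.Affine.CoordinateRing.mk_φ W N
  obtain ⟨q, hq⟩ := (AdjoinRoot.mk_eq_mk).mp hmk
  have h0 : W.toAffine.polynomial.evalEval x y = 0 := h
  have h2 := congrArg (evalEval x y) hq
  rw [evalEval_sub, evalEval_mul, h0, zero_mul, sub_eq_zero] at h2
  rw [h2, evalEval_C]

private lemma coe_nsmul' (k : ℕ) (a : ℤ) :
    k • ((a : ℤ) : WithTop ℤ) = (((k:ℤ) * a : ℤ) : WithTop ℤ) := by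
  induction k with
  | zero => simp
  | succ k ih => rw [succ_nsmul, ih, ← WithTop.coe_add]; congr 1; push_cast; ring

section Val

variable {K : Type*} [Field K] (v : K → WithTop ℤ)
    (hv_top : ∀ z : K, v z = ⊤ ↔ z = 0)
    (hv_mul : ∀ z w : K, v (z * w) = v z + v w)
    (hv_add : ∀ z w : K, min (v z) (v w) ≤ v (z + w))

include hv_top hv_mul in
private lemma val_one' : v 1 = 0 := by
  have h := hv_mul 1 1
  rw [mul_one] at h
  have h1 : v 1 ≠ ⊤ := fun h' => one_ne_zero ((hv_top 1).mp h')
  lift v 1 to ℤ using h1 with a ha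
  have h2 : a = a + a := by exact_mod_cast h
  have : a = 0 := by omega
  simp [this]

include hv_top hv_mul in
private lemma val_neg' (z : K) : v (-z) = v z := by
  have hm : v (-1 : K) = 0 := by
    have h := hv_mul (-1 : K) (-1)
    rw [neg_mul_neg, one_mul, val_one' v hv_top hv_mul] at h
    have h1 : v (-1 : K) ≠ ⊤ := fun h' => by
      have := (hv_top _).mp h'; norm_num at this
    lift v (-1 : K) to ℤ using h1 with a ha
    have h2 : (0:ℤ) = a + a := by exact_mod_cast h
    have : a = 0 := by omega
    simp [this]
  rw [show -z = -1 * z by ring, hv_mul, hm, zero_add]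

include hv_top hv_mul in
private lemma val_pow' (z : K) (k : ℕ) : v (z ^ k) = k • v z := by
  induction k with
  | zero => simpa using val_one' v hv_top hv_mul
  | succ k ih => rw [pow_succ, hv_mul, ih, succ_nsmul]

include hv_top hv_mul hv_add in
private lemma val_add_lt' {z w : K} (h : v z < v w) : v (z + w) = v z := by
  refine le_antisymm ?_ (le_trans (le_of_eq (min_eq_left h.le).symm) (hv_add z w))
  by_contra hc
  push_neg at hc
  have h3 := hv_add (z + w) (-w)
  rw [show z + w + -w = z by ring] at h3
  have h4 : v z < min (v (z + w)) (v (-w)) :=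
    lt_min hc (by rwa [val_neg' v hv_top hv_mul])
  exact absurd h3 (not_le.mpr h4)

include hv_top hv_add in
private lemma val_sum' {ι : Type*} (s : Finset ι) (f : ι → K) (a : WithTop ℤ)
    (h : ∀ i ∈ s, a ≤ v (f i)) : a ≤ v (∑ i ∈ s, f i) := by
  classical
  induction s using Finset.cons_induction with
  | empty => simp [(hv_top 0).mpr rfl]
  | cons i s his ih =>
    rw [Finset.sum_cons]
    refine le_trans (le_min (h i (Finset.mem_cons_self i s)) ?_) (hv_add _ _)
    exact ih fun j hj => h j (Finset.mem_cons_of_mem hj)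

include hv_top hv_mul hv_add in
private lemma val_eval_int_poly (p : K[X]) (D : ℕ) (_ : 1 ≤ D)
    (hdeg : p.natDegree ≤ D) (hlead : p.coeff D = 1) (hcoeff : ∀ k, 0 ≤ v (p.coeff k))
    (z : K) (ξ : ℤ) (hz : v z = (ξ : WithTop ℤ)) (hξ : ξ < 0) :
    v (p.eval z) = (((D:ℤ)*ξ : ℤ) : WithTop ℤ) := by
  rw [Polynomial.eval_eq_sum_range' (lt_of_le_of_lt hdeg (Nat.lt_succ_self D)),
    Finset.sum_range_succ, hlead, one_mul]
  have hzD : v (z^D) = (((D:ℤ)*ξ : ℤ) : WithTop ℤ) := by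
    rw [val_pow' v hv_top hv_mul, hz, coe_nsmul']
  have hT : ((((D:ℤ)-1)*ξ : ℤ) : WithTop ℤ) ≤ v (∑ i ∈ Finset.range D, p.coeff i * z^i) := by
    apply val_sum' v hv_top hv_add
    intro i hi
    rw [hv_mul, val_pow' v hv_top hv_mul, hz, coe_nsmul']
    calc ((((D:ℤ)-1)*ξ : ℤ) : WithTop ℤ) ≤ (((i:ℤ)*ξ : ℤ) : WithTop ℤ) := by
          rw [WithTop.coe_le_coe]
          apply mul_le_mul_of_nonpos_right _ hξ.le
          have := Finset.mem_range.mp hi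
          omega
      _ = 0 + (((i:ℤ)*ξ : ℤ) : WithTop ℤ) := (zero_add _).symm
      _ ≤ v (p.coeff i) + (((i:ℤ)*ξ : ℤ) : WithTop ℤ) := add_le_add_left (hcoeff i) _
  have hlt : v (z^D) < v (∑ i ∈ Finset.range D, p.coeff i * z^i) := by
    refine lt_of_lt_of_le ?_ hT
    rw [hzD, WithTop.coe_lt_coe]
    nlinarith
  rw [add_comm, val_add_lt' v hv_top hv_mul hv_add hlt, hzD]

end Val

set_option maxHeartbeats 4000000 in
/-- Let `K` be a field with a normalised discrete valuation `v` (a finite extension of `ℚ_p`),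
with ring of integers `R = {z : 0 ≤ v z}` and uniformiser `π`, and let `E/K` be a Weierstrass
curve with coefficients in `R` satisfying `v(a₃) > 0`, `v(a₄) > 0`, `v(a₆) > 0`.  Let
`x = u²x' + r`, `y = u³y' + u²sx' + t` be a change of variables with `r, s, t, u ∈ R` and
`v(u) > 0`, transforming `E` into a Weierstrass curve `E'` whose coefficients also lie in `R`.
Let `P = (x, y)` be a point on `E` with `v(x) > 0` and `P' = (x', y')` its image on `E'`.
If `v(φₙ(P)) ≤ v(ψₙ²(P))` for some `n ≥ 1`, then
`v(u²·φₙ'(P') + r·(ψₙ')²(P')) = v(u²·φₙ'(P'))`; equivalently,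
`v(φₙ(P)) = (n² − 1)·v(u²) + v(u²·φₙ'(P'))`. -/
theorem greatest_common_valuation_stmt_5 {K : Type*} [Field K]
    (v : K → WithTop ℤ)
    (hv_top : ∀ z : K, v z = ⊤ ↔ z = 0)
    (hv_mul : ∀ z w : K, v (z * w) = v z + v w)
    (hv_add : ∀ z w : K, min (v z) (v w) ≤ v (z + w))
    (π : K) (hπ : v π = 1)
    (W : WeierstrassCurve K)
    (ha₁ : 0 ≤ v W.a₁) (ha₂ : 0 ≤ v W.a₂) (ha₃ : 0 < v W.a₃)
    (ha₄ : 0 < v W.a₄) (ha₆ : 0 < v W.a₆)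
    (u : Kˣ) (r s t : K)
    (hr : 0 ≤ v r) (hs : 0 ≤ v s) (ht : 0 ≤ v t)
    (hu : 0 < v (u : K))
    (W' : WeierstrassCurve K) (hW' : W' = (⟨u, r, s, t⟩ : WeierstrassCurve.VariableChange K) • W)
    (ha₁' : 0 ≤ v W'.a₁) (ha₂' : 0 ≤ v W'.a₂) (ha₃' : 0 ≤ v W'.a₃)
    (ha₄' : 0 ≤ v W'.a₄) (ha₆' : 0 ≤ v W'.a₆)
    (x y x' y' : K)
    (hx : x = (u : K) ^ 2 * x' + r)
    (hy : y = (u : K) ^ 3 * y' + (u : K) ^ 2 * s * x' + t)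
    (hP : W.toAffine.Equation x y)
    (hvx : 0 < v x)
    (n : ℕ) (hn : 1 ≤ n)
    (hle : v ((W.φ n).evalEval x y) ≤ v ((W.ψ n).evalEval x y ^ 2)) :
    v ((u : K) ^ 2 * (W'.φ n).evalEval x' y' + r * (W'.ψ n).evalEval x' y' ^ 2) =
      v ((u : K) ^ 2 * (W'.φ n).evalEval x' y') ∧
    v ((W.φ n).evalEval x y) =
      (n ^ 2 - 1) • v ((u : K) ^ 2) + v ((u : K) ^ 2 * (W'.φ n).evalEval x' y') := by
  classical
  have hu0 : (u:K) ≠ 0 := Units.ne_zero u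
  -- integral forms of the transformed coefficients
  have hA1 : (u:K) * W'.a₁ = W.a₁ + 2*s := by
    rw [hW', WeierstrassCurve.variableChange_a₁]
    simp only [Units.val_inv_eq_inv_val]; field_simp
  have hA2 : (u:K)^2 * W'.a₂ = W.a₂ - s*W.a₁ + 3*r - s^2 := by
    rw [hW', WeierstrassCurve.variableChange_a₂]
    simp only [Units.val_inv_eq_inv_val, inv_pow]; field_simp
  have hA3 : (u:K)^3 * W'.a₃ = W.a₃ + r*W.a₁ + 2*t := by
    rw [hW', WeierstrassCurve.variableChange_a₃]
    simp only [Units.val_inv_eq_inv_val, inv_pow]; field_simp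
  have hA4 : (u:K)^4 * W'.a₄ = W.a₄ - s*W.a₃ + 2*r*W.a₂ - (t + r*s)*W.a₁ + 3*r^2 - 2*s*t := by
    rw [hW', WeierstrassCurve.variableChange_a₄]
    simp only [Units.val_inv_eq_inv_val, inv_pow]; field_simp
  have hA6 : (u:K)^6 * W'.a₆ = W.a₆ + r*W.a₄ + r^2*W.a₂ + r^3 - t*W.a₃ - t^2 - r*t*W.a₁ := by
    rw [hW', WeierstrassCurve.variableChange_a₆]
    simp only [Units.val_inv_eq_inv_val, inv_pow]; field_simp
  have hb2 : (u:K)^2 * W'.b₂ = W.b₂ + 12*r := by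
    rw [hW', WeierstrassCurve.variableChange_b₂]
    simp only [Units.val_inv_eq_inv_val, inv_pow]; field_simp
  have hb4 : (u:K)^4 * W'.b₄ = W.b₄ + r*W.b₂ + 6*r^2 := by
    rw [hW', WeierstrassCurve.variableChange_b₄]
    simp only [Units.val_inv_eq_inv_val, inv_pow]; field_simp
  have hb6 : (u:K)^6 * W'.b₆ = W.b₆ + 2*r*W.b₄ + r^2*W.b₂ + 4*r^3 := by
    rw [hW', WeierstrassCurve.variableChange_b₆]
    simp only [Units.val_inv_eq_inv_val, inv_pow]; field_simp
  have hb8 : (u:K)^8 * W'.b₈ = W.b₈ + 3*r*W.b₆ + 3*r^2*W.b₄ + r^3*W.b₂ + 3*r^4 := by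
    rw [hW', WeierstrassCurve.variableChange_b₈]
    simp only [Units.val_inv_eq_inv_val, inv_pow]; field_simp
  have hR : 4 * W.b₈ = W.b₂ * W.b₆ - W.b₄ ^ 2 := W.b_relation
  -- the three seed identities and the equation for the transformed point
  have hsb : 2*y + W.a₁*x + W.a₃ = (u:K)^(3:ℤ) * (2*y' + W'.a₁*x' + W'.a₃) := by
    rw [show (u:K)^(3:ℤ) = (u:K)^(3:ℕ) from zpow_ofNat _ 3, hx, hy]
    linear_combination (-(u:K)^2 * x') * hA1 - hA3
  have hsc : W.Ψ₃.eval x = (u:K)^(8:ℤ) * (W'.Ψ₃.eval x') := by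
    rw [show (u:K)^(8:ℤ) = (u:K)^(8:ℕ) from zpow_ofNat _ 8, hx,
      WeierstrassCurve.Ψ₃, WeierstrassCurve.Ψ₃]
    simp only [eval_add, eval_mul, eval_pow, eval_C, eval_X, eval_ofNat]
    linear_combination (-(u:K)^6*x'^3) * hb2 - (3*(u:K)^4*x'^2) * hb4 - (3*(u:K)^2*x') * hb6 - hb8
  have hsd : W.preΨ₄.eval x = (u:K)^(12:ℤ) * (W'.preΨ₄.eval x') := by
    rw [show (u:K)^(12:ℤ) = (u:K)^(12:ℕ) from zpow_ofNat _ 12, hx,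
      WeierstrassCurve.preΨ₄, WeierstrassCurve.preΨ₄]
    simp only [eval_add, eval_mul, eval_pow, eval_C, eval_X, eval_ofNat]
    linear_combination (-(u:K)^10*x'^5) * hb2 - (5*(u:K)^8*x'^4) * hb4 - (10*(u:K)^6*x'^3) * hb6
      - (10*(u:K)^4*x'^2) * hb8
      - ((u:K)^2*x') * (((u:K)^8*W'.b₈) * hb2 + (W.b₂ + 12*r) * hb8
          - ((u:K)^6*W'.b₆) * hb4 - (W.b₄ + r*W.b₂ + 6*r^2) * hb6)
      - (((u:K)^8*W'.b₈) * hb4 + (W.b₄ + r*W.b₂ + 6*r^2) * hb8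
          - ((u:K)^6*W'.b₆ + (W.b₆ + 2*r*W.b₄ + r^2*W.b₂ + 4*r^3)) * hb6)
      + (2*(u:K)^2*x'*r + r^2) * hR
  have heq' : W'.toAffine.Equation x' y' := by
    have base := (WeierstrassCurve.Affine.equation_iff _ _).mp hP
    rw [hx, hy] at base
    rw [WeierstrassCurve.Affine.equation_iff]
    apply mul_left_cancel₀ (pow_ne_zero 6 hu0)
    linear_combination base + ((u:K)^5*x'*y') * hA1 + ((u:K)^3*y') * hA3
      - ((u:K)^4*x'^2) * hA2 - ((u:K)^2*x') * hA4 - hA6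
  -- scaling of the division polynomials
  have hψscale : ∀ k : ℕ, (W.ψ (k:ℤ)).evalEval x y
      = (u:K)^((k:ℤ)^2-1) * (W'.ψ (k:ℤ)).evalEval x' y' := by
    intro k
    rw [psi_eval, psi_eval, hsb, hsc, hsd, normEDS_scale hu0]
  have hφfact : (W.φ (n:ℤ)).evalEval x y
      = (u:K)^(2*(n:ℤ)^2-2) * ((u:K)^2*(W'.φ (n:ℤ)).evalEval x' y'
          + r*((W'.ψ (n:ℤ)).evalEval x' y')^2) := by
    have h2 := hψscale (n+1)
    have h3 := hψscale (n-1)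
    have hc2 : ((n+1:ℕ):ℤ) = (n:ℤ)+1 := by push_cast; ring
    have hc3 : ((n-1:ℕ):ℤ) = (n:ℤ)-1 := by rw [Nat.cast_sub hn, Nat.cast_one]
    rw [hc2] at h2
    rw [hc3] at h3
    rw [phi_eval, hψscale n, h2, h3, phi_eval, hx]
    exact key_identity hu0 (n:ℤ) x' r _ _ _
  -- valuation bookkeeping
  have hvu_ne : v (u:K) ≠ ⊤ := fun h => hu0 ((hv_top _).mp h)
  obtain ⟨μ, hμ⟩ := WithTop.ne_top_iff_exists.mp hvu_ne
  have hμpos : 0 < μ := by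
    have := hu; rw [← hμ] at this; exact_mod_cast this
  set m₀ : ℕ := 2*n^2-2 with hm₀def
  have hm₀cast : ((m₀:ℕ):ℤ) = 2*(n:ℤ)^2-2 := by
    rw [hm₀def, Nat.cast_sub (by nlinarith)]
    push_cast; ring
  have hzn : (u:K)^(2*(n:ℤ)^2-2) = (u:K)^(m₀:ℕ) := by
    rw [← zpow_natCast (u:K) m₀, hm₀cast]
  have hc₀ : v ((u:K)^(2*(n:ℤ)^2-2)) = (((m₀:ℤ)*μ : ℤ) : WithTop ℤ) := by
    rw [hzn, val_pow' v hv_top hv_mul, ← hμ, coe_nsmul']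
  have hφval : v ((W.φ (n:ℤ)).evalEval x y)
      = (((m₀:ℤ)*μ : ℤ) : WithTop ℤ) + v ((u:K)^2*(W'.φ (n:ℤ)).evalEval x' y'
          + r*((W'.ψ (n:ℤ)).evalEval x' y')^2) := by
    rw [hφfact, hv_mul, hc₀]
  have heE : ((n:ℤ)^2-1)*((2:ℕ):ℤ) = 2*(n:ℤ)^2-2 := by push_cast; ring
  have hψsqval : v ((W.ψ (n:ℤ)).evalEval x y ^ 2)
      = (((m₀:ℤ)*μ : ℤ) : WithTop ℤ) + v (((W'.ψ (n:ℤ)).evalEval x' y')^2) := by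
    rw [hψscale n, upow_pow hu0, heE, hv_mul, hc₀]
  have hvu2 : v ((u:K)^2) = ((2*μ : ℤ) : WithTop ℤ) := by
    rw [val_pow' v hv_top hv_mul, ← hμ, coe_nsmul']
    norm_num
  -- the first claim
  have g1 : v ((u : K) ^ 2 * (W'.φ n).evalEval x' y' + r * (W'.ψ n).evalEval x' y' ^ 2) =
      v ((u : K) ^ 2 * (W'.φ n).evalEval x' y') := by
    by_cases hψ'0 : (W'.ψ (n:ℤ)).evalEval x' y' = 0
    · rw [hψ'0]
      norm_num
    · have hQtop : v (((W'.ψ (n:ℤ)).evalEval x' y')^2) ≠ ⊤ := fun h =>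
        pow_ne_zero 2 hψ'0 ((hv_top _).mp h)
      have hSle : v ((u:K)^2*(W'.φ (n:ℤ)).evalEval x' y'
          + r*((W'.ψ (n:ℤ)).evalEval x' y')^2) ≤ v (((W'.ψ (n:ℤ)).evalEval x' y')^2) := by
        have h := hle
        rw [hφval, hψsqval] at h
        exact (WithTop.add_le_add_iff_left (WithTop.coe_ne_top)).mp h
      rcases lt_or_ge (v ((u:K)^2*(W'.φ (n:ℤ)).evalEval x' y'))
          (v (r*((W'.ψ (n:ℤ)).evalEval x' y')^2)) with hlt | hge
      · exact val_add_lt' v hv_top hv_mul hv_add hlt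
      · -- the hard case
        have hQle : v (((W'.ψ (n:ℤ)).evalEval x' y')^2)
            ≤ v (r*((W'.ψ (n:ℤ)).evalEval x' y')^2) := by
          rw [hv_mul]
          calc v (((W'.ψ (n:ℤ)).evalEval x' y')^2)
              = 0 + v (((W'.ψ (n:ℤ)).evalEval x' y')^2) := (zero_add _).symm
            _ ≤ v r + v (((W'.ψ (n:ℤ)).evalEval x' y')^2) := add_le_add_left hr _
        have hminS : v (r*((W'.ψ (n:ℤ)).evalEval x' y')^2)
            ≤ v ((u:K)^2*(W'.φ (n:ℤ)).evalEval x' y'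
              + r*((W'.ψ (n:ℤ)).evalEval x' y')^2) :=
          le_trans (le_of_eq (min_eq_right hge).symm) (hv_add _ _)
        have hSQ : v ((u:K)^2*(W'.φ (n:ℤ)).evalEval x' y'
            + r*((W'.ψ (n:ℤ)).evalEval x' y')^2)
            = v (((W'.ψ (n:ℤ)).evalEval x' y')^2) :=
          le_antisymm hSle (le_trans hQle hminS)
        have hrQ : v (r*((W'.ψ (n:ℤ)).evalEval x' y')^2)
            = v (((W'.ψ (n:ℤ)).evalEval x' y')^2) :=
          le_antisymm (le_trans hminS hSle) hQle
        have hvr0 : v r = 0 := by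
          have h : v r + v (((W'.ψ (n:ℤ)).evalEval x' y')^2)
              = 0 + v (((W'.ψ (n:ℤ)).evalEval x' y')^2) := by
            rw [← hv_mul, zero_add]; exact hrQ
          exact WithTop.add_right_cancel hQtop h
        have hr0 : r ≠ 0 := by
          intro h
          rw [h, (hv_top 0).mpr rfl] at hvr0
          simp at hvr0
        have hvxr : v (x - r) = 0 := by
          have h1 : v (-r) = 0 := by rw [val_neg' v hv_top hv_mul]; exact hvr0
          have h2 : v (-r) < v x := by rw [h1]; exact hvx
          have h3 := val_add_lt' v hv_top hv_mul hv_add h2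
          rw [neg_add_eq_sub] at h3
          rw [h3, h1]
        have hux' : (u:K)^2*x' = x - r := by rw [hx]; ring
        have hvux' : v ((u:K)^2) + v x' = 0 := by
          rw [← hv_mul, hux', hvxr]
        have hx'ne : v x' ≠ ⊤ := by
          intro h
          rw [h, add_top] at hvux'
          simp at hvux'
        obtain ⟨ξ, hξeq⟩ := WithTop.ne_top_iff_exists.mp hx'ne
        have hξrel : 2*μ + ξ = 0 := by
          rw [hvu2, ← hξeq, ← WithTop.coe_add] at hvux'
          exact_mod_cast hvux'
        have hξneg : ξ < 0 := by omega
        -- coefficients of Φ' are integral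
        set R₀ : Subring K :=
          { carrier := {z | 0 ≤ v z}
            mul_mem' := fun {a b} ha hb => by
              simp only [Set.mem_setOf_eq] at *
              rw [hv_mul]; exact add_nonneg ha hb
            one_mem' := by
              simp only [Set.mem_setOf_eq]
              rw [val_one' v hv_top hv_mul]
            add_mem' := fun {a b} ha hb => by
              simp only [Set.mem_setOf_eq] at *
              exact le_trans (le_min ha hb) (hv_add a b)
            zero_mem' := by
              simp only [Set.mem_setOf_eq]
              rw [(hv_top 0).mpr rfl]; exact le_top
            neg_mem' := fun {a} ha => by
              simp only [Set.mem_setOf_eq] at *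
              rwa [val_neg' v hv_top hv_mul] } with hR₀def
        have hmemR₀ : ∀ z : K, z ∈ R₀ ↔ 0 ≤ v z := fun z => Iff.rfl
        have hΦcoeff : ∀ k, 0 ≤ v ((W'.Φ (n:ℤ)).coeff k) := by
          intro k
          set W₀' : WeierstrassCurve R₀ :=
            ⟨⟨W'.a₁, (hmemR₀ _).mpr ha₁'⟩, ⟨W'.a₂, (hmemR₀ _).mpr ha₂'⟩,
             ⟨W'.a₃, (hmemR₀ _).mpr ha₃'⟩, ⟨W'.a₄, (hmemR₀ _).mpr ha₄'⟩,
             ⟨W'.a₆, (hmemR₀ _).mpr ha₆'⟩⟩ with hW₀'def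
          have hmap : W₀'.map R₀.subtype = W' := rfl
          rw [← hmap, WeierstrassCurve.map_Φ, Polynomial.coeff_map]
          exact ((W₀'.Φ (n:ℤ)).coeff k).2
        have hΦdeg : (W'.Φ (n:ℤ)).natDegree ≤ n^2 := by
          have := WeierstrassCurve.natDegree_Φ_le W' (n:ℤ)
          rwa [Int.natAbs_natCast] at this
        have hΦlead : (W'.Φ (n:ℤ)).coeff (n^2) = 1 := by
          have := WeierstrassCurve.coeff_Φ W' (n:ℤ)
          rwa [Int.natAbs_natCast] at this
        have hφ'Phi : (W'.φ (n:ℤ)).evalEval x' y' = (W'.Φ (n:ℤ)).eval x' :=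
          phi_eq_Phi W' x' y' heq' (n:ℤ)
        have hφ'val : v ((W'.φ (n:ℤ)).evalEval x' y')
            = ((((n^2:ℕ):ℤ)*ξ : ℤ) : WithTop ℤ) := by
          rw [hφ'Phi]
          exact val_eval_int_poly v hv_top hv_mul hv_add _ (n^2) (by nlinarith)
            hΦdeg hΦlead hΦcoeff x' ξ hξeq.symm hξneg
        have hA'val : v ((u:K)^2*(W'.φ (n:ℤ)).evalEval x' y')
            = ((2*μ + ((n^2:ℕ):ℤ)*ξ : ℤ) : WithTop ℤ) := by
          rw [hv_mul, hvu2, hφ'val, ← WithTop.coe_add]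
        -- integrality of ψₙ(P)
        have hpos_add : ∀ {a b : WithTop ℤ}, 0 < a → 0 ≤ b → 0 < a + b :=
          fun ha hb => lt_of_lt_of_le ha (le_add_of_nonneg_right hb)
        have hpos_add' : ∀ {a b : WithTop ℤ}, 0 ≤ a → 0 < b → 0 < a + b :=
          fun ha hb => lt_of_lt_of_le hb (le_add_of_nonneg_left ha)
        have hvy : 0 < v y := by
          have heqxy := (WeierstrassCurve.Affine.equation_iff _ _).mp hP
          have hfac : y*(y + W.a₁*x + W.a₃) = x^3 + W.a₂*x^2 + W.a₄*x + W.a₆ := by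
            linear_combination heqxy
          have hRHS : 0 < v (x^3 + W.a₂*x^2 + W.a₄*x + W.a₆) := by
            have t1 : 0 < v (x^3) := by
              rw [show x^3 = x*(x*x) by ring, hv_mul, hv_mul]
              exact hpos_add hvx (hpos_add hvx hvx.le).le
            have t2 : 0 < v (W.a₂*x^2) := by
              rw [hv_mul, show x^2 = x*x by ring, hv_mul]
              exact hpos_add' ha₂ (hpos_add hvx hvx.le)
            have t3 : 0 < v (W.a₄*x) := by
              rw [hv_mul]; exact hpos_add ha₄ hvx.le
            have p1 : 0 < v (x^3 + W.a₂*x^2) :=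
              lt_of_lt_of_le (lt_min t1 t2) (hv_add _ _)
            have p2 : 0 < v (x^3 + W.a₂*x^2 + W.a₄*x) :=
              lt_of_lt_of_le (lt_min p1 t3) (hv_add _ _)
            exact lt_of_lt_of_le (lt_min p2 ha₆) (hv_add _ _)
          by_contra hy0
          push_neg at hy0
          have hrest : 0 < v (W.a₁*x + W.a₃) := by
            have t1 : 0 < v (W.a₁*x) := by
              rw [hv_mul]; exact hpos_add' ha₁ hvx
            exact lt_of_lt_of_le (lt_min t1 ha₃) (hv_add _ _)
          have h3 : v (y + (W.a₁*x + W.a₃)) = v y :=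
            val_add_lt' v hv_top hv_mul hv_add (lt_of_le_of_lt hy0 hrest)
          have h4 : v (y*(y + W.a₁*x + W.a₃)) = v y + v y := by
            rw [hv_mul, show y + W.a₁*x + W.a₃ = y + (W.a₁*x + W.a₃) by ring, h3]
          rw [hfac] at h4
          rw [h4] at hRHS
          exact absurd hRHS (not_lt.mpr (add_nonpos hy0 hy0))
        have hψint : 0 ≤ v ((W.ψ (n:ℤ)).evalEval x y) := by
          rw [psi_eval]
          have h2mem : (2:K) ∈ R₀ := by
            have := add_mem (one_mem R₀) (one_mem R₀)
            rwa [one_add_one_eq_two] at this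
          have hxm : x ∈ R₀ := (hmemR₀ _).mpr hvx.le
          have hym : y ∈ R₀ := (hmemR₀ _).mpr hvy.le
          have ha₁m : W.a₁ ∈ R₀ := (hmemR₀ _).mpr ha₁
          have ha₂m : W.a₂ ∈ R₀ := (hmemR₀ _).mpr ha₂
          have ha₃m : W.a₃ ∈ R₀ := (hmemR₀ _).mpr ha₃.le
          have ha₄m : W.a₄ ∈ R₀ := (hmemR₀ _).mpr ha₄.le
          have ha₆m : W.a₆ ∈ R₀ := (hmemR₀ _).mpr ha₆.le
          set W₀ : WeierstrassCurve R₀ :=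
            ⟨⟨W.a₁, ha₁m⟩, ⟨W.a₂, ha₂m⟩, ⟨W.a₃, ha₃m⟩, ⟨W.a₄, ha₄m⟩, ⟨W.a₆, ha₆m⟩⟩ with hW₀def
          have hmapW : W₀.map R₀.subtype = W := rfl
          set x₀ : R₀ := ⟨x, hxm⟩ with hx₀def
          have hbmem : (2*y + W.a₁*x + W.a₃) ∈ R₀ :=
            add_mem (add_mem (mul_mem h2mem hym) (mul_mem ha₁m hxm)) ha₃m
          have hcmem : W.Ψ₃.eval x ∈ R₀ := by
            rw [← hmapW, WeierstrassCurve.map_Ψ₃,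
              show x = R₀.subtype x₀ from rfl, Polynomial.eval_map,
              Polynomial.eval₂_at_apply]
            exact SetLike.coe_mem _
          have hdmem : W.preΨ₄.eval x ∈ R₀ := by
            rw [← hmapW, WeierstrassCurve.map_preΨ₄,
              show x = R₀.subtype x₀ from rfl, Polynomial.eval_map,
              Polynomial.eval₂_at_apply]
            exact SetLike.coe_mem _
          have : normEDS (2*y + W.a₁*x + W.a₃) (W.Ψ₃.eval x) (W.preΨ₄.eval x) (n:ℤ) ∈ R₀ := by
            lift (2*y + W.a₁*x + W.a₃) to R₀ using hbmem with b₀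
            lift (W.Ψ₃.eval x) to R₀ using hcmem with c₀
            lift (W.preΨ₄.eval x) to R₀ using hdmem with d₀
            rw [show (b₀:K) = R₀.subtype b₀ from rfl, show (c₀:K) = R₀.subtype c₀ from rfl,
              show (d₀:K) = R₀.subtype d₀ from rfl, ← map_normEDS]
            exact SetLike.coe_mem _
          exact (hmemR₀ _).mp this
        have hψsqint : 0 ≤ v ((W.ψ (n:ℤ)).evalEval x y ^ 2) := by
          rw [pow_two, hv_mul]
          exact add_nonneg hψint hψint
        obtain ⟨q, hq⟩ := WithTop.ne_top_iff_exists.mp hQtop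
        have hqrel : 0 ≤ (m₀:ℤ)*μ + q := by
          have h := hψsqint
          rw [hψsqval, ← hq, ← WithTop.coe_add] at h
          exact_mod_cast h
        have hA'leQ : v ((u:K)^2*(W'.φ (n:ℤ)).evalEval x' y')
            ≤ v (((W'.ψ (n:ℤ)).evalEval x' y')^2) := by
          rw [hA'val, ← hq, WithTop.coe_le_coe]
          have hc1 : ((n^2:ℕ):ℤ) = (n:ℤ)^2 := by push_cast; ring
          have hc2 : (m₀:ℤ) = 2*(n:ℤ)^2-2 := hm₀cast
          rw [hc1]
          have hξval : ξ = -(2*μ) := by omega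
          rw [hξval]
          rw [hc2] at hqrel
          nlinarith [hqrel]
        have hQleA' : v (((W'.ψ (n:ℤ)).evalEval x' y')^2)
            ≤ v ((u:K)^2*(W'.φ (n:ℤ)).evalEval x' y') := hrQ ▸ hge
        rw [hSQ]
        exact le_antisymm hQleA' hA'leQ
  refine ⟨g1, ?_⟩
  rw [hφval, g1]
  congr 1
  rw [hvu2, coe_nsmul', WithTop.coe_eq_coe]
  have hc1 : ((n^2-1:ℕ):ℤ) = (n:ℤ)^2-1 := by
    rw [Nat.cast_sub (by nlinarith), Nat.cast_one]
    push_cast; ring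
  rw [hc1, hm₀cast]
  ring
end

section
/- Suppose v(2) = 0 and let k ≥ 1 be an integer (corresponding to Kodaira type I_m^* with m = 2k even). Assume v(a₁) ≥ 1, v(a₂) = 1, v(a₃) ≥ k + 2, v(a₄) ≥ k + 2, v(a₆) ≥ 2k + 3, and moreover v(b₈) = 2k + 4. Let P = (x, y) be a point on E with v(x) > 0. Then: (a) if v(x) = 1, then v(φ₂(P)) = v(ψ₃(P)) = 4 and v(ψ₂²(P)) ≥ 4; (b) the range 1 < v(x) < k + 1 is impossible; (c) if v(x) ≥ k + 1, then v(φ₂(P)) = v(ψ₃(P)) = 2k + 4 (= m + 4) and v(ψ₂²(P)) ≥ 2k + 4. -/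
open Polynomial

section GCV8Helpers

variable {K : Type*} [Field K] (v : K → WithTop ℤ)

private lemma gcv8_v_one (hv_top : ∀ z : K, v z = ⊤ ↔ z = 0)
    (hv_mul : ∀ z w : K, v (z * w) = v z + v w) : v 1 = 0 := by
  have h := hv_mul 1 1
  rw [one_mul] at h
  cases hv : v (1 : K) with
  | top => exact absurd ((hv_top 1).mp hv) one_ne_zero
  | coe n =>
    rw [hv] at h
    norm_cast at h ⊢
    omega

private lemma gcv8_v_neg (hv_top : ∀ z : K, v z = ⊤ ↔ z = 0)
    (hv_mul : ∀ z w : K, v (z * w) = v z + v w) (z : K) : v (-z) = v z := by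
  have hone : v ((-1 : K) * (-1)) = v (-1) + v (-1) := hv_mul (-1) (-1)
  rw [neg_mul_neg, one_mul, gcv8_v_one v hv_top hv_mul] at hone
  have hm1 : v (-1 : K) = 0 := by
    cases hv : v (-1 : K) with
    | top => rw [hv] at hone; exact absurd hone.symm (by simp)
    | coe n => rw [hv] at hone; norm_cast at hone ⊢; omega
  have := hv_mul (-1) z
  rw [neg_one_mul, hm1, zero_add] at this
  exact this

private lemma gcv8_add_eq (hv_top : ∀ z : K, v z = ⊤ ↔ z = 0)
    (hv_mul : ∀ z w : K, v (z * w) = v z + v w)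
    (hv_add : ∀ z w : K, min (v z) (v w) ≤ v (z + w))
    (a b : K) (h : v b < v a) : v (a + b) = v b := by
  refine le_antisymm ?_ (le_trans (le_of_eq (min_eq_right h.le).symm) (hv_add a b))
  by_contra h'
  push_neg at h'
  have hmin := hv_add (a + b) (-a)
  rw [gcv8_v_neg v hv_top hv_mul a, show a + b + -a = b from by ring] at hmin
  exact absurd (lt_of_lt_of_le (lt_min h' h) hmin) (lt_irrefl _)

private lemma gcv8_sq_ne (hv_mul : ∀ z w : K, v (z * w) = v z + v w)
    (w : K) (c : ℤ) (hodd : c % 2 = 1) : v (w * w) ≠ (c : WithTop ℤ) := by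
  rw [hv_mul]
  cases hw : v w with
  | top => simp
  | coe n =>
    intro h
    norm_cast at h
    omega

private lemma gcv8_bump (t : WithTop ℤ) (c d : ℤ) (h : (c : WithTop ℤ) ≤ t)
    (hne : t ≠ (c : WithTop ℤ)) (hd : d ≤ c + 1) : (d : WithTop ℤ) ≤ t := by
  cases t with
  | top => exact le_top
  | coe n =>
    norm_cast at h hne ⊢
    omega

private lemma gcv8_cancel (t : WithTop ℤ) (c d e : ℤ)
    (h : (d : WithTop ℤ) ≤ (c : WithTop ℤ) + t) (he : e ≤ d - c) : (e : WithTop ℤ) ≤ t := by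
  cases t with
  | top => exact le_top
  | coe n =>
    rw [← WithTop.coe_add] at h
    norm_cast at h ⊢
    omega

end GCV8Helpers

/-- (Kodaira type `I_m^*`, `m = 2k` even, residue characteristic `≠ 2`.)
Let `K` be a field with a normalised discrete valuation `v` with uniformiser `π`, suppose
`v(2) = 0`, and let `k ≥ 1`.  Let `E/K` be a Weierstrass curve with `v(a₁) ≥ 1`, `v(a₂) = 1`,
`v(a₃) ≥ k + 2`, `v(a₄) ≥ k + 2`, `v(a₆) ≥ 2k + 3` and `v(b₈) = 2k + 4`.
Let `P = (x, y)` be a point on `E` with `v(x) > 0`.  Then: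
(a) if `v(x) = 1`, then `v(φ₂(P)) = v(ψ₃(P)) = 4` and `v(ψ₂²(P)) ≥ 4`;
(b) the range `1 < v(x) < k + 1` is impossible;
(c) if `v(x) ≥ k + 1`, then `v(φ₂(P)) = v(ψ₃(P)) = 2k + 4` and `v(ψ₂²(P)) ≥ 2k + 4`. -/
theorem greatest_common_valuation_stmt_8 {K : Type*} [Field K]
    (v : K → WithTop ℤ)
    (hv_top : ∀ z : K, v z = ⊤ ↔ z = 0)
    (hv_mul : ∀ z w : K, v (z * w) = v z + v w)
    (hv_add : ∀ z w : K, min (v z) (v w) ≤ v (z + w))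
    (π : K) (hπ : v π = 1)
    (hv2 : v (2 : K) = 0)
    (k : ℤ) (hk : 1 ≤ k)
    (W : WeierstrassCurve K)
    (ha₁ : 1 ≤ v W.a₁) (ha₂ : v W.a₂ = 1)
    (ha₃ : ((k + 2 : ℤ) : WithTop ℤ) ≤ v W.a₃)
    (ha₄ : ((k + 2 : ℤ) : WithTop ℤ) ≤ v W.a₄)
    (ha₆ : ((2 * k + 3 : ℤ) : WithTop ℤ) ≤ v W.a₆)
    (hb₈ : v W.b₈ = ((2 * k + 4 : ℤ) : WithTop ℤ))
    (x y : K) (hP : W.toAffine.Equation x y) (hx : 0 < v x) :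
    (v x = 1 →
      v ((W.Φ 2).eval x) = ((4 : ℤ) : WithTop ℤ) ∧
      v (W.Ψ₃.eval x) = ((4 : ℤ) : WithTop ℤ) ∧
      ((4 : ℤ) : WithTop ℤ) ≤ v (W.Ψ₂Sq.eval x)) ∧
    (¬ (1 < v x ∧ v x < ((k + 1 : ℤ) : WithTop ℤ))) ∧
    (((k + 1 : ℤ) : WithTop ℤ) ≤ v x →
      v ((W.Φ 2).eval x) = ((2 * k + 4 : ℤ) : WithTop ℤ) ∧
      v (W.Ψ₃.eval x) = ((2 * k + 4 : ℤ) : WithTop ℤ) ∧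
      ((2 * k + 4 : ℤ) : WithTop ℤ) ≤ v (W.Ψ₂Sq.eval x)) := by
  -- basic helpers
  have vneg := gcv8_v_neg v hv_top hv_mul
  have vE := gcv8_add_eq v hv_top hv_mul hv_add
  have vmin : ∀ {a b : K} {c : WithTop ℤ}, c ≤ v a → c ≤ v b → c ≤ v (a + b) :=
    fun ha hb => le_trans (le_min ha hb) (hv_add _ _)
  have wk : ∀ {a : K} {c d : ℤ}, c ≤ d → ((d : ℤ) : WithTop ℤ) ≤ v a →
      ((c : ℤ) : WithTop ℤ) ≤ v a :=
    fun h hd => le_trans (WithTop.coe_le_coe.mpr h) hd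
  have vmulc : ∀ {a b : K} {c d : ℤ}, ((c : ℤ) : WithTop ℤ) ≤ v a →
      ((d : ℤ) : WithTop ℤ) ≤ v b → ((c + d : ℤ) : WithTop ℤ) ≤ v (a * b) := by
    intro a b c d ha hb
    rw [hv_mul, WithTop.coe_add]
    exact add_le_add ha hb
  have vmule : ∀ {a b : K} {c d : ℤ}, v a = ((c : ℤ) : WithTop ℤ) →
      v b = ((d : ℤ) : WithTop ℤ) → v (a * b) = ((c + d : ℤ) : WithTop ℤ) := by
    intro a b c d ha hb
    rw [hv_mul, ha, hb, WithTop.coe_add]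
  have vElt : ∀ {a b : K} {c d : ℤ}, ((c : ℤ) : WithTop ℤ) ≤ v a →
      v b = ((d : ℤ) : WithTop ℤ) → d < c → v (a + b) = ((d : ℤ) : WithTop ℤ) := by
    intro a b c d ha hb hdc
    rw [vE a b (by rw [hb]; exact lt_of_lt_of_le (WithTop.coe_lt_coe.mpr hdc) ha)]
    exact hb
  -- normalise given hypotheses to integer-cast form
  have hv2' : v (2 : K) = ((0 : ℤ) : WithTop ℤ) := by rw [WithTop.coe_zero]; exact hv2
  have ha₁' : ((1 : ℤ) : WithTop ℤ) ≤ v W.a₁ := by rw [WithTop.coe_one]; exact ha₁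
  have ha₂' : v W.a₂ = ((1 : ℤ) : WithTop ℤ) := by rw [WithTop.coe_one]; exact ha₂
  have v4' : v (4 : K) = ((0 : ℤ) : WithTop ℤ) := by
    rw [show (4 : K) = 2 * 2 from by norm_num, vmule hv2' hv2']
    norm_num
  have v3ge : ((0 : ℤ) : WithTop ℤ) ≤ v (3 : K) := by
    rw [show (3 : K) = 1 + 2 from by norm_num]
    exact vmin (le_of_eq (by rw [gcv8_v_one v hv_top hv_mul, WithTop.coe_zero]))
      (le_of_eq (by rw [hv2']))
  -- valuations of the b-invariants
  have hb2 : v W.b₂ = ((1 : ℤ) : WithTop ℤ) := by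
    rw [WeierstrassCurve.b₂]
    have h4a₂ : v (4 * W.a₂) = ((1 : ℤ) : WithTop ℤ) := by
      rw [vmule v4' ha₂']; norm_num
    have ha₁sq : ((2 : ℤ) : WithTop ℤ) ≤ v (W.a₁ ^ 2) := by
      rw [sq]; exact vmulc ha₁' ha₁'
    exact vElt ha₁sq h4a₂ (by omega)
  have hb4 : ((k + 2 : ℤ) : WithTop ℤ) ≤ v W.b₄ := by
    rw [WeierstrassCurve.b₄]
    exact vmin (wk (by omega) (vmulc hv2'.ge ha₄)) (wk (by omega) (vmulc ha₁' ha₃))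
  have hb6 : ((2 * k + 3 : ℤ) : WithTop ℤ) ≤ v W.b₆ := by
    rw [WeierstrassCurve.b₆]
    refine vmin ?_ (wk (by omega) (vmulc v4'.ge ha₆))
    rw [sq]
    exact wk (by omega) (vmulc ha₃ ha₃)
  -- the key square identity on the curve
  rw [WeierstrassCurve.Affine.equation_iff] at hP
  have hw : (2 * y + W.a₁ * x + W.a₃) ^ 2 = W.Ψ₂Sq.eval x := by
    simp only [WeierstrassCurve.Ψ₂Sq, WeierstrassCurve.b₂, WeierstrassCurve.b₄,
      WeierstrassCurve.b₆, eval_add, eval_mul, eval_C, eval_pow, eval_X]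
    linear_combination 4 * hP
  have hwpar : ∀ c : ℤ, c % 2 = 1 → v (W.Ψ₂Sq.eval x) ≠ (c : WithTop ℤ) := by
    intro c hc
    rw [← hw, sq]
    exact gcv8_sq_ne v hv_mul _ c hc
  -- evaluations of the division polynomials
  have hPhi : (W.Φ 2).eval x = x ^ 4 - W.b₄ * x ^ 2 - 2 * W.b₆ * x - W.b₈ := by
    rw [WeierstrassCurve.Φ_two]; simp
  have hPsi3 : W.Ψ₃.eval x = 3 * x ^ 4 + W.b₂ * x ^ 3 + 3 * W.b₄ * x ^ 2
      + 3 * W.b₆ * x + W.b₈ := by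
    simp [WeierstrassCurve.Ψ₃]
  have hPsi2 : W.Ψ₂Sq.eval x = 4 * x ^ 3 + W.b₂ * x ^ 2 + 2 * W.b₄ * x + W.b₆ := by
    simp [WeierstrassCurve.Ψ₂Sq]
  refine ⟨?_, ?_, ?_⟩
  · -- case (a) : v x = 1
    intro h1
    have h1' : v x = ((1 : ℤ) : WithTop ℤ) := by rw [WithTop.coe_one]; exact h1
    have hx2 : v (x * x) = ((2 : ℤ) : WithTop ℤ) := by rw [vmule h1' h1']; norm_num
    have hx3 : v (x * (x * x)) = ((3 : ℤ) : WithTop ℤ) := by rw [vmule h1' hx2]; norm_num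
    have hx4 : v (x * (x * (x * x))) = ((4 : ℤ) : WithTop ℤ) := by
      rw [vmule h1' hx3]; norm_num
    -- Ψ₂Sq has valuation ≥ 3, and ≠ 3 by parity, hence ≥ 4
    have ge3 : ((3 : ℤ) : WithTop ℤ) ≤ v (W.Ψ₂Sq.eval x) := by
      rw [show W.Ψ₂Sq.eval x
          = 4 * (x * (x * x)) + (W.b₂ * (x * x) + (2 * (W.b₄ * x) + W.b₆)) from by
        rw [hPsi2]; ring]
      refine vmin (wk (by omega) (vmulc v4'.ge hx3.ge)) (vmin ?_ (vmin ?_ ?_))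
      · exact wk (by omega) (vmulc hb2.ge hx2.ge)
      · exact wk (by omega) (vmulc hv2'.ge (vmulc hb4 h1'.ge))
      · exact wk (by omega) hb6
    have ge4 : ((4 : ℤ) : WithTop ℤ) ≤ v (W.Ψ₂Sq.eval x) :=
      gcv8_bump _ 3 4 ge3 (hwpar 3 (by norm_num)) (by omega)
    -- hence v (4x + b₂) ≥ 2
    have h4xb2 : ((2 : ℤ) : WithTop ℤ) ≤ v (4 * x + W.b₂) := by
      have hkey : ((4 : ℤ) : WithTop ℤ) ≤ v ((x * x) * (4 * x + W.b₂)) := by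
        rw [show (x * x) * (4 * x + W.b₂)
            = W.Ψ₂Sq.eval x + (-(2 * (W.b₄ * x)) + -W.b₆) from by rw [hPsi2]; ring]
        refine vmin ge4 (vmin ?_ ?_)
        · rw [vneg]; exact wk (by omega) (vmulc hv2'.ge (vmulc hb4 h1'.ge))
        · rw [vneg]; exact wk (by omega) hb6
      rw [hv_mul, hx2] at hkey
      exact gcv8_cancel _ 2 4 2 hkey (by omega)
    -- hence v (3x + b₂) = 1
    have h3xb2 : v (3 * x + W.b₂) = ((1 : ℤ) : WithTop ℤ) := by
      rw [show (3 * x + W.b₂ : K) = (4 * x + W.b₂) + -x from by ring]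
      exact vElt h4xb2 (by rw [vneg]; exact h1') (by omega)
    refine ⟨?_, ?_, ge4⟩
    · -- Φ₂
      rw [show (W.Φ 2).eval x
          = (-(W.b₄ * (x * x)) + (-(2 * (W.b₆ * x)) + -W.b₈)) + x * (x * (x * x)) from by
        rw [hPhi]; ring]
      refine vElt (c := 5) (vmin ?_ (vmin ?_ ?_)) hx4 (by omega)
      · rw [vneg]; exact wk (by omega) (vmulc hb4 hx2.ge)
      · rw [vneg]; exact wk (by omega) (vmulc hv2'.ge (vmulc hb6 h1'.ge))
      · rw [vneg, hb₈]; exact WithTop.coe_le_coe.mpr (by omega)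
    · -- Ψ₃
      rw [show W.Ψ₃.eval x
          = (3 * (W.b₄ * (x * x)) + (3 * (W.b₆ * x) + W.b₈))
            + (x * (x * x)) * (3 * x + W.b₂) from by rw [hPsi3]; ring]
      have hdom : v ((x * (x * x)) * (3 * x + W.b₂)) = ((4 : ℤ) : WithTop ℤ) := by
        rw [vmule hx3 h3xb2]; norm_num
      refine vElt (c := 5) (vmin ?_ (vmin ?_ ?_)) hdom (by omega)
      · exact wk (by omega) (vmulc v3ge (vmulc hb4 hx2.ge))
      · exact wk (by omega) (vmulc v3ge (vmulc hb6 h1'.ge))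
      · rw [hb₈]; exact WithTop.coe_le_coe.mpr (by omega)
  · -- case (b) : 1 < v x < k + 1 is impossible
    rintro ⟨hlo, hhi⟩
    have hne : v x ≠ ⊤ := ne_top_of_lt hhi
    cases hvx : v x with
    | top => exact hne hvx
    | coe n =>
      rw [hvx] at hlo hhi
      rw [show (1 : WithTop ℤ) = ((1 : ℤ) : WithTop ℤ) from (WithTop.coe_one).symm] at hlo
      have hn1 : 1 < n := WithTop.coe_lt_coe.mp hlo
      have hn2 : n < k + 1 := WithTop.coe_lt_coe.mp hhi
      have hvx' : v x = ((n : ℤ) : WithTop ℤ) := hvx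
      have hx2 : v (x * x) = ((n + n : ℤ) : WithTop ℤ) := vmule hvx' hvx'
      have hdom : v (W.b₂ * (x * x)) = ((1 + (n + n) : ℤ) : WithTop ℤ) := vmule hb2 hx2
      have heval : v (W.Ψ₂Sq.eval x) = ((1 + (n + n) : ℤ) : WithTop ℤ) := by
        rw [show W.Ψ₂Sq.eval x
            = (4 * (x * (x * x)) + (2 * (W.b₄ * x) + W.b₆)) + W.b₂ * (x * x) from by
          rw [hPsi2]; ring]
        refine vElt (c := n + n + 2) (vmin ?_ (vmin ?_ ?_)) hdom (by omega)
        · exact wk (by omega) (vmulc v4'.ge (vmulc hvx'.ge hx2.ge))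
        · exact wk (by omega) (vmulc hv2'.ge (vmulc hb4 hvx'.ge))
        · exact wk (by omega) hb6
      exact hwpar (1 + (n + n)) (by omega) heval
  · -- case (c) : v x ≥ k + 1
    intro hc
    have hx2 : ((2 * k + 2 : ℤ) : WithTop ℤ) ≤ v (x * x) :=
      wk (by omega) (vmulc hc hc)
    have hx3 : ((3 * k + 3 : ℤ) : WithTop ℤ) ≤ v (x * (x * x)) :=
      wk (by omega) (vmulc hc hx2)
    have hx4 : ((4 * k + 4 : ℤ) : WithTop ℤ) ≤ v (x * (x * (x * x))) :=
      wk (by omega) (vmulc hc hx3)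
    have ge1 : ((2 * k + 3 : ℤ) : WithTop ℤ) ≤ v (W.Ψ₂Sq.eval x) := by
      rw [show W.Ψ₂Sq.eval x
          = 4 * (x * (x * x)) + (W.b₂ * (x * x) + (2 * (W.b₄ * x) + W.b₆)) from by
        rw [hPsi2]; ring]
      refine vmin (wk (by omega) (vmulc v4'.ge hx3)) (vmin ?_ (vmin ?_ ?_))
      · exact wk (by omega) (vmulc hb2.ge hx2)
      · exact wk (by omega) (vmulc hv2'.ge (vmulc hb4 hc))
      · exact hb6
    have ge2 : ((2 * k + 4 : ℤ) : WithTop ℤ) ≤ v (W.Ψ₂Sq.eval x) :=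
      gcv8_bump _ (2 * k + 3) (2 * k + 4) ge1 (hwpar (2 * k + 3) (by omega)) (by omega)
    refine ⟨?_, ?_, ge2⟩
    · -- Φ₂
      rw [show (W.Φ 2).eval x
          = (x * (x * (x * x)) + (-(W.b₄ * (x * x)) + -(2 * (W.b₆ * x)))) + -W.b₈ from by
        rw [hPhi]; ring]
      have hdom : v (-W.b₈) = ((2 * k + 4 : ℤ) : WithTop ℤ) := by rw [vneg]; exact hb₈
      refine vElt (c := 2 * k + 5) (vmin (wk (by omega) hx4) (vmin ?_ ?_)) hdom (by omega)
      · rw [vneg]; exact wk (by omega) (vmulc hb4 hx2)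
      · rw [vneg]; exact wk (by omega) (vmulc hv2'.ge (vmulc hb6 hc))
    · -- Ψ₃
      rw [show W.Ψ₃.eval x
          = (3 * (x * (x * (x * x))) + (W.b₂ * (x * (x * x))
            + (3 * (W.b₄ * (x * x)) + 3 * (W.b₆ * x)))) + W.b₈ from by rw [hPsi3]; ring]
      refine vElt (c := 2 * k + 5) (vmin ?_ (vmin ?_ (vmin ?_ ?_))) hb₈ (by omega)
      · exact wk (by omega) (vmulc v3ge hx4)
      · exact wk (by omega) (vmulc hb2.ge hx3)
      · exact wk (by omega) (vmulc v3ge (vmulc hb4 hx2))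
      · exact wk (by omega) (vmulc v3ge (vmulc hb6 hc))
end
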